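/- Suppose each gradient ∇g_i is Lipschitz continuous on ℝ^n with constant L, let ω > L/2, and suppose each map x ↦ B_i(x) is continuous with symmetric positive definite values. Let {x^k} ⊂ ℝ^n be defined by x^{k+1} = x^k + d_ω(x^k). If the level set {x ∈ ℝ^n : F_i(x) ≤ F_i(x^0) for all i = 1,…,m} is bounded, then {x^k} has at least one accumulation point, and every accumulation point of {x^k} is a Pareto stationary point. -/

import Mathlib

open Filter Topology
open scoped RealInnerProductSpace

noncomputable section

/-- `Euc n` is Euclidean `n`-space `ℝ^n`. -/
abbrev Euc (n : ℕ) := EuclideanSpace ℝ (Fin n)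

/-- `HasDirDeriv f x d D` : the one-sided directional derivative of `f` at `x`
in direction `d` exists and equals `D`, i.e. `(f (x + α • d) - f x)/α → D` as `α → 0⁺`. -/
def HasDirDeriv {n : ℕ} (f : Euc n → ℝ) (x d : Euc n) (D : ℝ) : Prop :=
  Filter.Tendsto (fun α : ℝ => (f (x + α • d) - f x) / α)
    (nhdsWithin 0 (Set.Ioi 0)) (nhds D)

/-- `x` is Pareto stationary for the objectives `F i`:
for every direction `d`, `max_i F_i'(x; d) ≥ 0`, i.e. some objective has
nonnegative directional derivative in direction `d`. -/
def ParetoStationary {n m : ℕ} (F : Fin m → Euc n → ℝ) (x : Euc n) : Prop :=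
  ∀ d : Euc n, ∃ i : Fin m, ∃ D : ℝ, HasDirDeriv (F i) x d D ∧ 0 ≤ D

/-- `θ_x(d) = max_i { ⟪∇g_i(x), d⟫ + ½⟪d, B_i(x) d⟫ + h_i(x+d) - h_i(x) }`. -/
def theta {n m : ℕ} (g h : Fin m → Euc n → ℝ)
    (B : Fin m → Euc n → (Euc n →L[ℝ] Euc n)) (x d : Euc n) : ℝ :=
  ⨆ i : Fin m, (⟪gradient (g i) x, d⟫ + (1 / 2) * ⟪d, B i x d⟫ + h i (x + d) - h i x)

/-- `φ_{ω,x}(d) = θ_x(d) + (ω/2)‖d‖²`. -/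
def phi {n m : ℕ} (g h : Fin m → Euc n → ℝ)
    (B : Fin m → Euc n → (Euc n →L[ℝ] Euc n)) (ω : ℝ) (x d : Euc n) : ℝ :=
  theta g h B x d + (ω / 2) * ‖d‖ ^ 2

/-! ### Auxiliary definitions and lemmas -/

/-- The `i`-th term inside the max defining `theta`. -/
def Tfun {n m : ℕ} (g h : Fin m → Euc n → ℝ)
    (B : Fin m → Euc n → (Euc n →L[ℝ] Euc n)) (i : Fin m) (x d : Euc n) : ℝ :=
  ⟪gradient (g i) x, d⟫ + (1 / 2) * ⟪d, B i x d⟫ + h i (x + d) - h i x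

lemma theta_eq {n m : ℕ} (g h : Fin m → Euc n → ℝ)
    (B : Fin m → Euc n → (Euc n →L[ℝ] Euc n)) (x d : Euc n) :
    theta g h B x d = ⨆ i, Tfun g h B i x d := rfl

lemma Tfun_zero {n m : ℕ} (g h : Fin m → Euc n → ℝ)
    (B : Fin m → Euc n → (Euc n →L[ℝ] Euc n)) (i : Fin m) (x : Euc n) :
    Tfun g h B i x 0 = 0 := by
  simp [Tfun]

lemma theta_zero {n m : ℕ} [Nonempty (Fin m)] (g h : Fin m → Euc n → ℝ)
    (B : Fin m → Euc n → (Euc n →L[ℝ] Euc n)) (x : Euc n) :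
    theta g h B x 0 = 0 := by
  rw [theta_eq]
  simp only [Tfun_zero]
  exact ciSup_const

section Quad
variable {E : Type*} [NormedAddCommGroup E] [InnerProductSpace ℝ E]

lemma quad_combo' (B : E →L[ℝ] E) (hs : ∀ u v : E, ⟪B u, v⟫ = ⟪u, B v⟫) (t : ℝ) (u v : E) :
    ⟪(1 - t) • u + t • v, B ((1 - t) • u + t • v)⟫
      = (1 - t) * ⟪u, B u⟫ + t * ⟪v, B v⟫ - t * (1 - t) * ⟪v - u, B (v - u)⟫ := by
  have h1 : ⟪v, B u⟫ = ⟪u, B v⟫ := by rw [← hs u v, real_inner_comm]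
  simp only [map_add, map_smul, map_sub, inner_add_left, inner_add_right, inner_sub_left,
    inner_sub_right, real_inner_smul_left, real_inner_smul_right]
  rw [h1]
  ring

lemma norm_combo_sq' (t : ℝ) (u v : E) :
    ‖(1 - t) • u + t • v‖ ^ 2
      = (1 - t) * ‖u‖ ^ 2 + t * ‖v‖ ^ 2 - t * (1 - t) * ‖v - u‖ ^ 2 := by
  have h : ∀ w : E, ‖w‖ ^ 2 = ⟪w, w⟫ := fun w => (real_inner_self_eq_norm_sq w).symm
  rw [h, h, h, h]
  simp only [inner_add_left, inner_add_right, inner_sub_left, inner_sub_right,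
    real_inner_smul_left, real_inner_smul_right]
  rw [real_inner_comm v u]
  ring

end Quad

lemma hasDerivAt_comp_line {n : ℕ} {f : Euc n → ℝ} (hf : Differentiable ℝ f)
    (y d : Euc n) (t : ℝ) :
    HasDerivAt (fun s : ℝ => f (y + s • d)) ⟪gradient f (y + t • d), d⟫ t := by
  have hline : HasDerivAt (fun s : ℝ => y + s • d) d t := by
    simpa using ((hasDerivAt_id t).smul_const d).const_add y
  have h1 : HasFDerivAt f ((InnerProductSpace.toDual ℝ (Euc n)) (gradient f (y + t • d)))
      (y + t • d) := hasGradientAt_iff_hasFDerivAt.mp (hf _).hasGradientAt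
  have h2 := h1.comp_hasDerivAt t hline
  simpa [InnerProductSpace.toDual_apply_apply, Function.comp_def] using h2

/-- The descent lemma: quadratic upper bound for a function with Lipschitz gradient. -/
lemma descent_lemma {n : ℕ} {f : Euc n → ℝ} (hf : Differentiable ℝ f)
    {L : NNReal} (hL : LipschitzWith L (gradient f)) (y d : Euc n) :
    f (y + d) ≤ f y + ⟪gradient f y, d⟫ + (L : ℝ) / 2 * ‖d‖ ^ 2 := by
  set c1 : ℝ := ⟪gradient f y, d⟫ with hc1
  set c2 : ℝ := (L : ℝ) / 2 * ‖d‖ ^ 2 with hc2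
  set ψ : ℝ → ℝ := fun t => f (y + t • d) - t * c1 - t ^ 2 * c2 with hψ
  have hψd : ∀ t : ℝ, HasDerivAt ψ
      (⟪gradient f (y + t • d), d⟫ - c1 - 2 * t * c2) t := by
    intro t
    have ha := (hasDerivAt_comp_line hf y d t).sub ((hasDerivAt_id t).mul_const c1)
    have hb := (hasDerivAt_pow 2 t).mul_const c2
    have := ha.sub hb
    simp only [Nat.cast_ofNat, pow_one] at this
    exact this.congr_deriv (by rw [show (2:ℕ) - 1 = 1 from rfl]; ring)
  have hcont : Continuous ψ := by
    have : Differentiable ℝ ψ := fun t => (hψd t).differentiableAt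
    exact this.continuous
  have hanti : AntitoneOn ψ (Set.Icc 0 1) := by
    apply antitoneOn_of_deriv_nonpos (convex_Icc 0 1) hcont.continuousOn
    · exact fun t _ => (hψd t).differentiableAt.differentiableWithinAt
    · intro t ht
      rw [interior_Icc] at ht
      rw [(hψd t).deriv]
      have hip : ⟪gradient f (y + t • d), d⟫ - c1
          = ⟪gradient f (y + t • d) - gradient f y, d⟫ := by
        rw [inner_sub_left]
      have hn1 : ⟪gradient f (y + t • d) - gradient f y, d⟫
          ≤ ‖gradient f (y + t • d) - gradient f y‖ * ‖d‖ := real_inner_le_norm _ _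
      have hn2 : ‖gradient f (y + t • d) - gradient f y‖ ≤ (L : ℝ) * (t * ‖d‖) := by
        have := hL.dist_le_mul (y + t • d) y
        rw [dist_eq_norm, dist_eq_norm] at this
        calc ‖gradient f (y + t • d) - gradient f y‖ ≤ (L : ℝ) * ‖y + t • d - y‖ := this
          _ = (L : ℝ) * (t * ‖d‖) := by
              rw [add_sub_cancel_left, norm_smul, Real.norm_eq_abs, abs_of_pos ht.1]
      rw [hip, hc2]
      have h3 : ‖gradient f (y + t • d) - gradient f y‖ * ‖d‖ ≤ (L : ℝ) * (t * ‖d‖) * ‖d‖ :=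
        mul_le_mul_of_nonneg_right hn2 (norm_nonneg d)
      nlinarith [hn1, h3]
  have h01 := hanti (Set.left_mem_Icc.mpr zero_le_one) (Set.right_mem_Icc.mpr zero_le_one)
    zero_le_one
  have hψ0 : ψ 0 = f y := by simp [hψ]
  have hψ1 : ψ 1 = f (y + d) - c1 - c2 := by simp [hψ]
  rw [hψ0, hψ1] at h01
  linarith

/-- Strong minimality: the minimizer of the `ω`-strongly convex function `φ_{ω,y}` satisfies a
quadratic growth bound. -/
lemma strong_min {n m : ℕ} (g h : Fin m → Euc n → ℝ)
    (B : Fin m → Euc n → (Euc n →L[ℝ] Euc n)) (hm : 0 < m)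
    (hh : ∀ i, ConvexOn ℝ Set.univ (h i))
    (hBsymm : ∀ i x (u v : Euc n), ⟪B i x u, v⟫ = ⟪u, B i x v⟫)
    (hBpos : ∀ i x (d : Euc n), d ≠ 0 → 0 < ⟪d, B i x d⟫)
    {ω : ℝ} (y u : Euc n)
    (hmin : ∀ d, phi g h B ω y u ≤ phi g h B ω y d) (z : Euc n) :
    phi g h B ω y u + ω / 2 * ‖z - u‖ ^ 2 ≤ phi g h B ω y z := by
  haveI : Nonempty (Fin m) := Fin.pos_iff_nonempty.mp hm
  have hbdd : ∀ x d, BddAbove (Set.range fun i => Tfun g h B i x d) :=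
    fun _ _ => Set.Finite.bddAbove (Set.finite_range _)
  have key : ∀ t ∈ Set.Ioo (0:ℝ) 1,
      phi g h B ω y u + ω / 2 * ((1 - t) * ‖z - u‖ ^ 2) ≤ phi g h B ω y z := by
    intro t ht
    set w : Euc n := (1 - t) • u + t • z with hw
    have hθw : theta g h B y w ≤ (1 - t) * theta g h B y u + t * theta g h B y z := by
      rw [theta_eq]
      apply ciSup_le
      intro i
      have hTle : Tfun g h B i y w ≤ (1 - t) * Tfun g h B i y u + t * Tfun g h B i y z := by
        have hquad := quad_combo' (B i y) (hBsymm i y) t u z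
        have hlin : ⟪gradient (g i) y, w⟫
            = (1 - t) * ⟪gradient (g i) y, u⟫ + t * ⟪gradient (g i) y, z⟫ := by
          rw [hw, inner_add_right, real_inner_smul_right, real_inner_smul_right]
        have hq0 : 0 ≤ ⟪z - u, B i y (z - u)⟫ := by
          rcases eq_or_ne (z - u) 0 with h0 | h0
          · simp [h0]
          · exact (hBpos i y _ h0).le
        have hconv : h i (y + w) ≤ (1 - t) * h i (y + u) + t * h i (y + z) := by
          have hyw : y + w = (1 - t) • (y + u) + t • (y + z) := by
            rw [hw]; module
          rw [hyw]
          exact (hh i).2 trivial trivial (by linarith [ht.2.le]) ht.1.le (by ring)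
        simp only [Tfun, hw] at *
        rw [hlin, hquad]
        nlinarith [hq0, mul_pos ht.1 (sub_pos.mpr ht.2)]
      refine hTle.trans ?_
      have h1 := le_ciSup (hbdd y u) i
      have h2 := le_ciSup (hbdd y z) i
      rw [theta_eq, theta_eq]
      have h3 := mul_le_mul_of_nonneg_left h1 (by linarith [ht.2.le] : (0:ℝ) ≤ 1 - t)
      have h4 := mul_le_mul_of_nonneg_left h2 ht.1.le
      linarith
    have hnorm : ‖w‖ ^ 2 = (1 - t) * ‖u‖ ^ 2 + t * ‖z‖ ^ 2 - t * (1 - t) * ‖z - u‖ ^ 2 := by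
      rw [hw]; exact norm_combo_sq' t u z
    have hmw := hmin w
    have h3 : t * (phi g h B ω y u + ω / 2 * ((1 - t) * ‖z - u‖ ^ 2)) ≤ t * phi g h B ω y z := by
      simp only [phi] at hmw ⊢
      rw [hnorm] at hmw
      linarith [hθw, hmw]
    exact le_of_mul_le_mul_left h3 ht.1
  have hlim : Tendsto (fun t : ℝ => phi g h B ω y u + ω / 2 * ((1 - t) * ‖z - u‖ ^ 2))
      (𝓝[>] (0:ℝ)) (𝓝 (phi g h B ω y u + ω / 2 * ‖z - u‖ ^ 2)) := by
    have hc : Continuous fun t : ℝ => phi g h B ω y u + ω / 2 * ((1 - t) * ‖z - u‖ ^ 2) := by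
      fun_prop
    have := hc.tendsto 0
    simp only [sub_zero, one_mul] at this
    exact this.mono_left nhdsWithin_le_nhds
  refine le_of_tendsto hlim ?_
  filter_upwards [Ioo_mem_nhdsGT_of_mem (Set.mem_Ico.mpr ⟨le_refl (0:ℝ), zero_lt_one⟩)] with t ht
  exact key t ht

set_option maxHeartbeats 2000000 in
/-- with a bounded level set, the sequence generated by the
proximal quasi-Newton method without line searches has accumulation points,
and all of them are Pareto stationary. -/
theorem algorithm_two_bounded_level_set
    {n m : ℕ} (g h : Fin m → Euc n → ℝ)
    (B : Fin m → Euc n → (Euc n →L[ℝ] Euc n))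
    (hm : 0 < m)
    (hg : ∀ i, ContDiff ℝ 2 (g i))
    (hsc : ∀ i, ∃ a : ℝ, 0 < a ∧ ∀ x y : Euc n,
      a * ‖x - y‖ ^ 2 ≤ ⟪gradient (g i) x - gradient (g i) y, x - y⟫)
    (hh : ∀ i, ConvexOn ℝ Set.univ (h i))
    (hBsymm : ∀ i x (u v : Euc n), ⟪B i x u, v⟫ = ⟪u, B i x v⟫)
    (hBpos : ∀ i x (d : Euc n), d ≠ 0 → 0 < ⟪d, B i x d⟫)
    (hBcont : ∀ i, Continuous (fun x => B i x))
    (L : NNReal) (hL : ∀ i, LipschitzWith L (gradient (g i)))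
    (ω : ℝ) (hω : (L : ℝ) / 2 < ω)
    (dω : Euc n → Euc n)
    (hmin : ∀ y d, phi g h B ω y (dω y) ≤ phi g h B ω y d)
    (huniq : ∀ y d, (∀ d', phi g h B ω y d ≤ phi g h B ω y d') → d = dω y)
    (x : ℕ → Euc n)
    (hstep : ∀ k, x (k + 1) = x k + dω (x k))
    (hlevel : Bornology.IsBounded
      {y : Euc n | ∀ i, g i y + h i y ≤ g i (x 0) + h i (x 0)}) :
    (∃ a : Euc n, MapClusterPt a atTop x) ∧
      ∀ a : Euc n, MapClusterPt a atTop x →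
        ParetoStationary (fun i y => g i y + h i y) a := by
  classical
  haveI hne : Nonempty (Fin m) := Fin.pos_iff_nonempty.mp hm
  set i0 : Fin m := ⟨0, hm⟩ with hi0
  have hω0 : 0 < ω := lt_of_le_of_lt (by positivity) hω
  have hgdiff : ∀ i, Differentiable ℝ (g i) := fun i => (hg i).differentiable (by norm_num)
  have hgradcont : ∀ i, Continuous (gradient (g i)) := fun i => (hL i).continuous
  have hhcont : ∀ i, Continuous (h i) := by
    intro i
    have := (hh i).continuousOn isOpen_univ
    rwa [continuousOn_univ] at this
  have hFcont : ∀ i, Continuous (fun y => g i y + h i y) := fun i =>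
    ((hgdiff i).continuous).add (hhcont i)
  have hbdd : ∀ x d, BddAbove (Set.range fun i => Tfun g h B i x d) :=
    fun _ _ => Set.Finite.bddAbove (Set.finite_range _)
  have hsm : ∀ y z, phi g h B ω y (dω y) + ω / 2 * ‖z - dω y‖ ^ 2 ≤ phi g h B ω y z :=
    fun y z => strong_min g h B hm hh hBsymm hBpos y (dω y) (hmin y) z
  have hphi0 : ∀ y : Euc n, phi g h B ω y 0 = 0 := by
    intro y; simp [phi, theta_zero]
  have hθd : ∀ y, theta g h B y (dω y) ≤ -(ω * ‖dω y‖ ^ 2) := by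
    intro y
    have h1 := hsm y 0
    rw [hphi0 y] at h1
    simp only [phi] at h1
    rw [zero_sub, norm_neg] at h1
    linarith
  have hBnn : ∀ i y (d : Euc n), 0 ≤ ⟪d, B i y d⟫ := by
    intro i y d
    rcases eq_or_ne d 0 with rfl | h0
    · simp
    · exact (hBpos i y d h0).le
  have hdecr : ∀ y i, g i (y + dω y) + h i (y + dω y)
      ≤ g i y + h i y - (ω - (L : ℝ) / 2) * ‖dω y‖ ^ 2 := by
    intro y i
    have hdes := descent_lemma (hgdiff i) (hL i) y (dω y)
    have hTle : Tfun g h B i y (dω y) ≤ theta g h B y (dω y) := by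
      rw [theta_eq]; exact le_ciSup (hbdd y (dω y)) i
    have hq := hBnn i y (dω y)
    simp only [Tfun] at hTle
    have hθ := hθd y
    linarith
  have hdec : ∀ k i, g i (x (k+1)) + h i (x (k+1))
      ≤ g i (x k) + h i (x k) - (ω - (L : ℝ) / 2) * ‖dω (x k)‖ ^ 2 := by
    intro k i; rw [hstep k]; exact hdecr (x k) i
  have hωL : (0:ℝ) < ω - (L : ℝ) / 2 := by linarith
  have hmono : ∀ i, Antitone fun k => g i (x k) + h i (x k) := by
    intro i
    apply antitone_nat_of_succ_le
    intro k
    have := hdec k i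
    nlinarith [norm_nonneg (dω (x k)), sq_nonneg ‖dω (x k)‖]
  have hxS : ∀ k, x k ∈ {y : Euc n | ∀ i, g i y + h i y ≤ g i (x 0) + h i (x 0)} :=
    fun k i => hmono i (Nat.zero_le k)
  -- existence of a cluster point
  have hcomp : IsCompact (closure {y : Euc n | ∀ i, g i y + h i y ≤ g i (x 0) + h i (x 0)}) :=
    Metric.isCompact_of_isClosed_isBounded isClosed_closure hlevel.closure
  have hle : map x atTop ≤ 𝓟 (closure {y : Euc n | ∀ i, g i y + h i y ≤ g i (x 0) + h i (x 0)}) := by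
    rw [le_principal_iff, mem_map]
    filter_upwards with k using subset_closure (hxS k)
  obtain ⟨a0, -, ha0⟩ := hcomp.exists_clusterPt hle
  refine ⟨⟨a0, ha0⟩, ?_⟩
  -- every cluster point is Pareto stationary
  intro a ha
  haveI hΛne : (atTop ⊓ comap x (𝓝 a)).NeBot := by
    rw [neBot_inf_comap_iff_map, inf_comm]
    exact ha
  set Λ : Filter ℕ := atTop ⊓ comap x (𝓝 a) with hΛ
  have hΛatTop : Λ ≤ atTop := inf_le_left
  have hxa : Tendsto x Λ (𝓝 a) := tendsto_comap.mono_left inf_le_right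
  have hFia : ∀ i, Tendsto (fun k => g i (x k) + h i (x k)) atTop (𝓝 (g i a + h i a)) := by
    intro i
    have hca : Tendsto (fun k => g i (x k) + h i (x k)) Λ (𝓝 (g i a + h i a)) :=
      ((hFcont i).tendsto a).comp hxa
    rcases tendsto_of_antitone (hmono i) with hbot | ⟨l, hl⟩
    · exact absurd hca (not_tendsto_nhds_of_tendsto_atBot (hbot.mono_left hΛatTop) _)
    · have : g i a + h i a = l := tendsto_nhds_unique hca (hl.mono_left hΛatTop)
      rwa [this]
  have hdiff0 : Tendsto (fun k => (g i0 (x k) + h i0 (x k)) - (g i0 (x (k+1)) + h i0 (x (k+1))))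
      atTop (𝓝 0) := by
    have h1 := hFia i0
    have h2 : Tendsto (fun k => g i0 (x (k+1)) + h i0 (x (k+1))) atTop
        (𝓝 (g i0 a + h i0 a)) := h1.comp (tendsto_add_atTop_nat 1)
    simpa using h1.sub h2
  have hsq : Tendsto (fun k => ‖dω (x k)‖ ^ 2) atTop (𝓝 0) := by
    have hb : ∀ k, ‖dω (x k)‖ ^ 2
        ≤ ((g i0 (x k) + h i0 (x k)) - (g i0 (x (k+1)) + h i0 (x (k+1)))) / (ω - (L : ℝ) / 2) := by
      intro k
      rw [le_div_iff₀ hωL]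
      have := hdec k i0
      nlinarith
    have hdiv : Tendsto (fun k =>
        ((g i0 (x k) + h i0 (x k)) - (g i0 (x (k+1)) + h i0 (x (k+1)))) / (ω - (L : ℝ) / 2))
        atTop (𝓝 0) := by
      simpa using hdiff0.div_const (ω - (L : ℝ) / 2)
    exact squeeze_zero (fun k => sq_nonneg _) hb hdiv
  have hd0 : Tendsto (fun k => dω (x k)) atTop (𝓝 0) := by
    rw [tendsto_zero_iff_norm_tendsto_zero]
    have := (Real.continuous_sqrt.tendsto 0).comp hsq
    simpa [Function.comp_def, Real.sqrt_sq (norm_nonneg _)] using this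
  have hTcont : ∀ i, Continuous fun p : Euc n × Euc n => Tfun g h B i p.1 p.2 := by
    intro i
    simp only [Tfun]
    refine Continuous.sub (Continuous.add (Continuous.add ?_ ?_) ?_) ?_
    · exact ((hgradcont i).comp continuous_fst).inner continuous_snd
    · exact continuous_const.mul (continuous_snd.inner
        (isBoundedBilinearMap_apply.continuous.comp
          (((hBcont i).comp continuous_fst).prodMk continuous_snd)))
    · exact (hhcont i).comp (continuous_fst.add continuous_snd)
    · exact (hhcont i).comp continuous_fst
  -- the key inequality at the cluster point
  have hstar : ∀ z : Euc n, 0 ≤ theta g h B a z + ω / 2 * ‖z‖ ^ 2 := by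
    intro z
    set E : Euc n → ℝ := fun y' => ∑ i, |Tfun g h B i y' z - Tfun g h B i a z| with hE
    have hEcont : Continuous E := by
      apply continuous_finset_sum
      intro i _
      exact (((hTcont i).comp (continuous_id.prodMk continuous_const)).sub continuous_const).abs
    have hineq : ∀ k, Tfun g h B i0 (x k) (dω (x k)) + ω / 2 * ‖dω (x k)‖ ^ 2
        ≤ theta g h B a z + E (x k) + ω / 2 * ‖z‖ ^ 2 := by
      intro k
      have h1 : Tfun g h B i0 (x k) (dω (x k)) ≤ theta g h B (x k) (dω (x k)) := by
        rw [theta_eq]; exact le_ciSup (hbdd (x k) (dω (x k))) i0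
      have h2 := hmin (x k) z
      have h3 : theta g h B (x k) z ≤ theta g h B a z + E (x k) := by
        rw [theta_eq]
        apply ciSup_le
        intro i
        have ha1 : Tfun g h B i a z ≤ theta g h B a z := by
          rw [theta_eq]; exact le_ciSup (hbdd a z) i
        have ha2 : Tfun g h B i (x k) z - Tfun g h B i a z ≤ E (x k) := by
          refine (le_abs_self _).trans ?_
          exact Finset.single_le_sum (f := fun j => |Tfun g h B j (x k) z - Tfun g h B j a z|)
            (fun j _ => abs_nonneg _) (Finset.mem_univ i)
        linarith
      simp only [phi] at h2
      linarith
    have hlhs : Tendsto (fun k => Tfun g h B i0 (x k) (dω (x k)) + ω / 2 * ‖dω (x k)‖ ^ 2)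
        Λ (𝓝 0) := by
      have hpair : Tendsto (fun k => (x k, dω (x k))) Λ (𝓝 (a, (0 : Euc n))) :=
        hxa.prodMk_nhds ((hd0.mono_left hΛatTop))
      have h1 : Tendsto (fun k => Tfun g h B i0 (x k) (dω (x k))) Λ (𝓝 (Tfun g h B i0 a 0)) := by
        have hcc := ((hTcont i0).tendsto (a, (0 : Euc n))).comp hpair
        exact hcc
      have h2 : Tendsto (fun k => ω / 2 * ‖dω (x k)‖ ^ 2) Λ (𝓝 (ω / 2 * 0)) :=
        (hsq.mono_left hΛatTop).const_mul _
      have := h1.add h2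
      simpa [Tfun_zero] using this
    have hrhs : Tendsto (fun k => theta g h B a z + E (x k) + ω / 2 * ‖z‖ ^ 2)
        Λ (𝓝 (theta g h B a z + 0 + ω / 2 * ‖z‖ ^ 2)) := by
      have hE0 : E a = 0 := by simp [hE]
      have h1 := (hEcont.tendsto a).comp hxa
      rw [hE0] at h1
      exact (tendsto_const_nhds.add h1).add tendsto_const_nhds
    have := le_of_tendsto_of_tendsto' hlhs hrhs hineq
    simpa using this
  -- Pareto stationarity
  intro d
  set lin : Fin m → ℝ := fun i => ⟪gradient (g i) a, d⟫ with hlin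
  set q : Fin m → ℝ → ℝ := fun i t => (h i (a + t • d) - h i a) / t with hq
  have hφconv : ∀ i, ConvexOn ℝ (Set.univ : Set ℝ) (fun t : ℝ => h i (a + t • d)) := by
    intro i
    have h1 := (hh i).comp_affineMap (AffineMap.lineMap a (a + d))
    have heq : (fun t : ℝ => h i (a + t • d)) = (h i) ∘ (AffineMap.lineMap a (a + d)) := by
      funext t
      simp [AffineMap.lineMap_apply, add_sub_cancel_left, add_comm]
    rw [heq]
    simpa using h1
  have hq_eq : ∀ i (t : ℝ), t ≠ 0 →
      q i t = ((fun s : ℝ => h i (a + s • d)) t - (fun s : ℝ => h i (a + s • d)) 0) / (t - 0) := by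
    intro i t _
    simp [hq]
  have hqmono : ∀ i, MonotoneOn (q i) (Set.Ioi (0:ℝ)) := by
    intro i s hs t ht hst
    have := (hφconv i).secant_mono (a := (0:ℝ)) trivial trivial trivial
      (ne_of_gt (Set.mem_Ioi.mp hs)) (ne_of_gt (Set.mem_Ioi.mp ht)) hst
    rw [hq_eq i s (ne_of_gt (Set.mem_Ioi.mp hs)), hq_eq i t (ne_of_gt (Set.mem_Ioi.mp ht))]
    exact this
  have hqbdd : ∀ i, BddBelow (q i '' Set.Ioi (0:ℝ)) := by
    intro i
    refine ⟨((fun s : ℝ => h i (a + s • d)) (-1) - (fun s : ℝ => h i (a + s • d)) 0) / (-1 - 0), ?_⟩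
    rintro r ⟨t, ht, rfl⟩
    have := (hφconv i).secant_mono (a := (0:ℝ)) (x := (-1:ℝ)) (y := t) trivial trivial trivial
      (by norm_num) (ne_of_gt (Set.mem_Ioi.mp ht)) (by linarith [Set.mem_Ioi.mp ht])
    rw [hq_eq i t (ne_of_gt (Set.mem_Ioi.mp ht))]
    exact this
  set Dh : Fin m → ℝ := fun i => sInf (q i '' Set.Ioi 0) with hDh
  have hqtend : ∀ i, Tendsto (q i) (𝓝[>] (0:ℝ)) (𝓝 (Dh i)) := fun i =>
    (hqmono i).tendsto_nhdsGT (hqbdd i)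
  have hgdd : ∀ i, HasDirDeriv (g i) a d (lin i) := by
    intro i
    have hcomp : HasDerivAt (fun t : ℝ => g i (a + t • d)) (lin i) 0 := by
      have := hasDerivAt_comp_line (hgdiff i) a d 0
      simpa [hlin] using this
    have hslope := hasDerivAt_iff_tendsto_slope.mp hcomp
    have hmono' : (𝓝[>] (0:ℝ)) ≤ (𝓝[≠] (0:ℝ)) :=
      nhdsWithin_mono 0 (fun t ht => ne_of_gt ht)
    refine (hslope.mono_left hmono').congr' ?_
    filter_upwards [self_mem_nhdsWithin] with t ht
    simp [slope_def_field]
  have hhdd : ∀ i, HasDirDeriv (h i) a d (Dh i) := fun i => hqtend i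
  have hFdd : ∀ i, HasDirDeriv (fun y => g i y + h i y) a d (lin i + Dh i) := by
    intro i
    have := (hgdd i).add (hhdd i)
    refine Tendsto.congr (fun α => ?_) this
    rw [← add_div]
    ring_nf
  by_contra hcon
  push_neg at hcon
  have hDneg : ∀ i, lin i + Dh i < 0 := by
    intro i
    rcases hcon i (lin i + Dh i) with hc
    exact hc (hFdd i)
  set ε : ℝ := (Finset.univ.inf' Finset.univ_nonempty fun i => -(lin i + Dh i)) / 2 with hε
  have hεpos : 0 < ε := by
    rw [hε]
    apply div_pos _ two_pos
    rw [Finset.lt_inf'_iff]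
    intro i _
    linarith [hDneg i]
  have hev : ∀ᶠ t in 𝓝[>] (0:ℝ), (∀ i, q i t < Dh i + ε)
      ∧ (∀ i, t / 2 * (⟪d, B i a d⟫ + ω * ‖d‖ ^ 2) < ε) ∧ 0 < t := by
    have h1 : ∀ᶠ t in 𝓝[>] (0:ℝ), ∀ i, q i t < Dh i + ε := by
      rw [eventually_all]
      intro i
      exact (hqtend i).eventually_lt_const (by linarith)
    have h2 : ∀ᶠ t in 𝓝[>] (0:ℝ), ∀ i, t / 2 * (⟪d, B i a d⟫ + ω * ‖d‖ ^ 2) < ε := by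
      rw [eventually_all]
      intro i
      have hc : Tendsto (fun t : ℝ => t / 2 * (⟪d, B i a d⟫ + ω * ‖d‖ ^ 2)) (𝓝[>] 0) (𝓝 0) := by
        have hcc : Continuous fun t : ℝ => t / 2 * (⟪d, B i a d⟫ + ω * ‖d‖ ^ 2) := by fun_prop
        have := hcc.tendsto 0
        simp only [zero_div, zero_mul] at this
        exact this.mono_left nhdsWithin_le_nhds
      exact hc.eventually_lt_const hεpos
    have h3 : ∀ᶠ t in 𝓝[>] (0:ℝ), 0 < t := eventually_mem_nhdsWithin
    exact h1.and (h2.and h3)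
  obtain ⟨t, hq1, hq2, ht0⟩ := hev.exists
  have h0 := hstar (t • d)
  obtain ⟨it, hit⟩ := exists_eq_ciSup_of_finite (f := fun i => Tfun g h B i a (t • d))
  rw [theta_eq, ← hit] at h0
  have hht : h it (a + t • d) - h it a = t * q it t := by
    rw [hq]
    field_simp
  have hTval : Tfun g h B it a (t • d)
      = t * lin it + t ^ 2 / 2 * ⟪d, B it a d⟫ + t * q it t := by
    simp only [Tfun]
    rw [real_inner_smul_right]
    have hB2 : ⟪t • d, B it a (t • d)⟫ = t * (t * ⟪d, B it a d⟫) := by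
      rw [map_smul, real_inner_smul_left, real_inner_smul_right]
    rw [hB2]
    rw [hlin]
    have : h it (a + t • d) - h it a = t * q it t := hht
    linarith [this]
  have hnorm : ‖t • d‖ ^ 2 = t ^ 2 * ‖d‖ ^ 2 := by
    rw [norm_smul, Real.norm_eq_abs, mul_pow, sq_abs]
  rw [hTval, hnorm] at h0
  have h1 : 0 ≤ t * (lin it + q it t + t / 2 * (⟪d, B it a d⟫ + ω * ‖d‖ ^ 2)) := by
    nlinarith [h0]
  have h2 : 0 ≤ lin it + q it t + t / 2 * (⟪d, B it a d⟫ + ω * ‖d‖ ^ 2) :=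
    (mul_nonneg_iff_of_pos_left ht0).mp h1
  have h3 := hq1 it
  have h4 := hq2 it
  have h5 : 2 * ε ≤ -(lin it + Dh it) := by
    have := Finset.inf'_le (f := fun i => -(lin i + Dh i)) (Finset.mem_univ it)
    rw [hε] at *
    linarith [this]
  linarith [h2, h3, h4, h5]
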